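/- Let G be a star graph with at least two vertices (i.e. a tree with a vertex adjacent to all other vertices). Then for every positive semidefinite A ∈ P_G and every integer k > 2, the set N_k(A) is empty. Moreover, for every such A, ker Q_A ∩ ker Q_{A∘A} = ∩_{m ≥ 1} ker Q_{A^{∘m}}, where ker Q_M := {β : βᵀ M β = 0}. -/

import Mathlib

open Matrix
open scoped Classical

/-- The `m`-th entrywise (Hadamard) power of `A`; for `m = 0` it is the matrix
whose `(i,j)` entry is `1` if `A i j ≠ 0` and `0` if `A i j = 0`. -/
noncomputable def hadPow {n : ℕ} (A : Matrix (Fin n) (Fin n) ℝ) (m : ℕ) :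
    Matrix (Fin n) (Fin n) ℝ :=
  if m = 0 then Matrix.of (fun i j => if A i j = 0 then 0 else 1)
  else Matrix.of (fun i j => A i j ^ m)

/-- `N_k(A)`: vectors `β` with `βᵀ A^{∘m} β = 0` for all `0 ≤ m ≤ k−1`
and `βᵀ A^{∘k} β > 0`. -/
noncomputable def Nset {n : ℕ} (A : Matrix (Fin n) (Fin n) ℝ) (k : ℕ) : Set (Fin n → ℝ) :=
  {β | (∀ m < k, β ⬝ᵥ (hadPow A m).mulVec β = 0) ∧ 0 < β ⬝ᵥ (hadPow A k).mulVec β}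

private lemma sq_sum_split {ι : Type*} [DecidableEq ι] (T : Finset ι) (u : ι → ℝ) :
    (∑ i ∈ T, u i) ^ 2 = (∑ i ∈ T, u i ^ 2) + ∑ i ∈ T, u i * ∑ j ∈ T.erase i, u j := by
  rw [sq, Finset.sum_mul_sum, ← Finset.sum_add_distrib]
  refine Finset.sum_congr rfl fun i hi => ?_
  rw [← Finset.mul_sum, ← Finset.add_sum_erase _ _ hi]
  ring

private lemma core {ι : Type*} [DecidableEq ι] (s : Finset ι)
    (a b β : ι → ℝ) (d t : ℝ)
    (ha : ∀ i ∈ s, 0 ≤ a i) (ht : t ≠ 0)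
    (hrow : ∀ i ∈ s, a i * β i + b i * t = 0)
    (E1 : d ^ 1 * t ^ 2 + ∑ i ∈ s, (a i ^ 1 * β i ^ 2 + 2 * b i ^ 1 * β i * t) = 0)
    (E2 : d ^ 2 * t ^ 2 + ∑ i ∈ s, (a i ^ 2 * β i ^ 2 + 2 * b i ^ 2 * β i * t) = 0) :
    ∀ m : ℕ, 1 ≤ m →
      d ^ m * t ^ 2 + ∑ i ∈ s, (a i ^ m * β i ^ 2 + 2 * b i ^ m * β i * t) = 0 := by
  have ht2 : (0:ℝ) < t ^ 2 := by positivity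
  set T : Finset ι := s.filter (fun i => b i ≠ 0) with hT
  -- vanishing of terms with b i = 0
  have hzero : ∀ m : ℕ, 1 ≤ m → ∀ i ∈ s, b i = 0 →
      a i ^ m * β i ^ 2 + 2 * b i ^ m * β i * t = 0 := by
    intro m hm i hi hb
    obtain ⟨m', rfl⟩ : ∃ m', m = m' + 1 := ⟨m - 1, by omega⟩
    have h1 : a i * β i = 0 := by have := hrow i hi; rw [hb] at this; linarith
    calc a i ^ (m' + 1) * β i ^ 2 + 2 * b i ^ (m' + 1) * β i * t
        = a i ^ m' * (a i * β i) * β i + 2 * (b i ^ m' * b i) * β i * t := by ring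
      _ = 0 := by rw [h1, hb]; ring
  have hsplit : ∀ m : ℕ, 1 ≤ m →
      ∑ i ∈ T, (a i ^ m * β i ^ 2 + 2 * b i ^ m * β i * t)
        = ∑ i ∈ s, (a i ^ m * β i ^ 2 + 2 * b i ^ m * β i * t) := by
    intro m hm
    refine Finset.sum_filter_of_ne fun i hi hne hb => hne (hzero m hm i hi hb)
  -- facts on T
  have hmemT : ∀ i ∈ T, i ∈ s ∧ b i ≠ 0 := fun i hi => by
    simpa [hT] using Finset.mem_filter.mp hi
  have hapos : ∀ i ∈ T, 0 < a i := by
    intro i hi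
    obtain ⟨his, hbne⟩ := hmemT i hi
    rcases (ha i his).lt_or_eq with h | h
    · exact h
    · exfalso
      have hr := hrow i his
      rw [← h, zero_mul, zero_add] at hr
      rcases mul_eq_zero.mp hr with h' | h'
      · exact hbne h'
      · exact ht h'
  have hbeta : ∀ i ∈ T, β i = -(b i / a i) * t := by
    intro i hi
    obtain ⟨his, hbne⟩ := hmemT i hi
    have hane : a i ≠ 0 := (hapos i hi).ne'
    have hr := hrow i his
    field_simp
    linarith
  set u : ι → ℝ := fun i => b i ^ 2 / a i with hu
  have hupos : ∀ i ∈ T, 0 < u i := by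
    intro i hi
    obtain ⟨his, hbne⟩ := hmemT i hi
    exact div_pos (lt_of_le_of_ne (sq_nonneg _) (Ne.symm (pow_ne_zero 2 hbne))) (hapos i hi)
  have hterm1 : ∀ i ∈ T, a i ^ 1 * β i ^ 2 + 2 * b i ^ 1 * β i * t = -u i * t ^ 2 := by
    intro i hi
    have hane : a i ≠ 0 := (hapos i hi).ne'
    rw [hbeta i hi]
    simp only [hu]
    field_simp
    ring
  have hterm2 : ∀ i ∈ T,
      a i ^ 2 * β i ^ 2 + 2 * b i ^ 2 * β i * t = (b i ^ 2 - 2 * b i ^ 3 / a i) * t ^ 2 := by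
    intro i hi
    have hane : a i ≠ 0 := (hapos i hi).ne'
    rw [hbeta i hi]
    field_simp
    ring
  have hd : d = ∑ i ∈ T, u i := by
    have h1 := E1
    rw [← hsplit 1 le_rfl, Finset.sum_congr rfl hterm1, ← Finset.sum_mul] at h1
    have hneg : ∑ i ∈ T, -u i = -∑ i ∈ T, u i := by simp
    rw [hneg, pow_one] at h1
    have hz : (d - ∑ i ∈ T, u i) * t ^ 2 = 0 := by rw [sub_mul]; linarith
    have := (mul_eq_zero.mp hz).resolve_right ht2.ne'
    linarith
  have hE2 : d ^ 2 + ∑ i ∈ T, (b i ^ 2 - 2 * b i ^ 3 / a i) = 0 := by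
    have h2 := E2
    rw [← hsplit 2 one_le_two, Finset.sum_congr rfl hterm2, ← Finset.sum_mul] at h2
    have hz : (d ^ 2 + ∑ i ∈ T, (b i ^ 2 - 2 * b i ^ 3 / a i)) * t ^ 2 = 0 := by
      rw [add_mul]; linarith
    exact (mul_eq_zero.mp hz).resolve_right ht2.ne'
  have hid : ∀ i ∈ T, b i ^ 2 - 2 * b i ^ 3 / a i = (u i - b i) ^ 2 - u i ^ 2 := by
    intro i hi
    have hane : a i ≠ 0 := (hapos i hi).ne'
    simp only [hu]
    field_simp
    ring
  have hmaster : (∑ i ∈ T, u i * ∑ j ∈ T.erase i, u j) + ∑ i ∈ T, (u i - b i) ^ 2 = 0 := by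
    have h2 := hE2
    rw [hd, sq_sum_split, Finset.sum_congr rfl hid, Finset.sum_sub_distrib] at h2
    linarith
  have hCnn : ∀ i ∈ T, 0 ≤ u i * ∑ j ∈ T.erase i, u j := fun i hi =>
    mul_nonneg (hupos i hi).le
      (Finset.sum_nonneg fun j hj => (hupos j (Finset.mem_of_mem_erase hj)).le)
  have hSnn : ∀ i ∈ T, (0:ℝ) ≤ (u i - b i) ^ 2 := fun i _ => sq_nonneg _
  have hC0 : ∑ i ∈ T, u i * ∑ j ∈ T.erase i, u j = 0 := by
    have n1 := Finset.sum_nonneg hCnn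
    have n2 := Finset.sum_nonneg hSnn
    linarith
  have hS0 : ∑ i ∈ T, (u i - b i) ^ 2 = 0 := by
    have n1 := Finset.sum_nonneg hCnn
    have n2 := Finset.sum_nonneg hSnn
    linarith
  have hub : ∀ i ∈ T, b i = a i := by
    intro i hi
    obtain ⟨his, hbne⟩ := hmemT i hi
    have hane : a i ≠ 0 := (hapos i hi).ne'
    have h0 := (Finset.sum_eq_zero_iff_of_nonneg hSnn).mp hS0 i hi
    have h1 : u i = b i := by
      have := sq_eq_zero_iff.mp h0
      linarith
    have h2 : b i ^ 2 / a i = b i := h1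
    have h3 : b i ^ 2 = b i * a i := by field_simp at h2; rw [h2]; ring
    have h4 : b i * b i = b i * a i := by rw [← pow_two]; exact h3
    exact mul_left_cancel₀ hbne h4
  have hsingle : ∀ i ∈ T, ∀ j ∈ T, j = i := by
    intro i hi j hj
    by_contra hne
    have h1 := (Finset.sum_eq_zero_iff_of_nonneg hCnn).mp hC0 i hi
    have h2 : ∑ j ∈ T.erase i, u j = 0 := by
      rcases mul_eq_zero.mp h1 with h | h
      · exact absurd h (hupos i hi).ne'
      · exact h
    have hjmem : j ∈ T.erase i := Finset.mem_erase.mpr ⟨hne, hj⟩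
    have := (Finset.sum_eq_zero_iff_of_nonneg
      (fun k hk => (hupos k (Finset.mem_of_mem_erase hk)).le)).mp h2 j hjmem
    exact (hupos j hj).ne' this
  intro m hm
  rw [← hsplit m hm]
  rcases T.eq_empty_or_nonempty with hTe | ⟨i0, hi0⟩
  · rw [hTe] at hd ⊢
    simp only [Finset.sum_empty] at hd ⊢
    rw [hd, zero_pow (by omega), zero_mul, add_zero]
  · have hTeq : T = {i0} := Finset.eq_singleton_iff_unique_mem.mpr ⟨hi0, fun j hj => hsingle i0 hi0 j hj⟩
    rw [hTeq] at hd ⊢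
    rw [Finset.sum_singleton] at hd ⊢
    have hba := hub i0 hi0
    have hane : a i0 ≠ 0 := (hapos i0 hi0).ne'
    have hβ0 : β i0 = -t := by
      rw [hbeta i0 hi0, hba, div_self hane]; ring
    have hda : d = a i0 := by
      rw [hd]; simp only [hu]; rw [hba]; field_simp
    rw [hda, hβ0, hba]
    ring

private lemma rowSum {n : ℕ} (A : Matrix (Fin n) (Fin n) ℝ) (c : Fin n)
    (hz : ∀ i j, i ≠ j → i ≠ c → j ≠ c → A i j = 0)
    (β : Fin n → ℝ) (m : ℕ) (hm : 1 ≤ m) {i : Fin n} (hi : i ≠ c) :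
    ∑ j, A i j ^ m * β j = A i i ^ m * β i + A i c ^ m * β c := by
  rw [← Finset.add_sum_erase _ _ (Finset.mem_univ c)]
  have hmem : i ∈ Finset.univ.erase c := Finset.mem_erase.mpr ⟨hi, Finset.mem_univ i⟩
  rw [Finset.sum_eq_single_of_mem i hmem ?h]
  · ring
  case h =>
    intro j hj hji
    have hjc : j ≠ c := (Finset.mem_erase.mp hj).1
    rw [hz i j (Ne.symm hji) hi hjc, zero_pow (by omega), zero_mul]

private lemma hadPow_form {n : ℕ} (A : Matrix (Fin n) (Fin n) ℝ) (c : Fin n)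
    (hsym : ∀ i j, A j i = A i j)
    (hz : ∀ i j, i ≠ j → i ≠ c → j ≠ c → A i j = 0)
    (β : Fin n → ℝ) (m : ℕ) (hm : 1 ≤ m) :
    β ⬝ᵥ (hadPow A m).mulVec β =
      A c c ^ m * β c ^ 2 +
        ∑ i ∈ Finset.univ.erase c,
          (A i i ^ m * β i ^ 2 + 2 * A i c ^ m * β i * β c) := by
  have hm0 : m ≠ 0 := by omega
  have h0 : β ⬝ᵥ (hadPow A m).mulVec β = ∑ i, β i * ∑ j, A i j ^ m * β j := by
    simp [hadPow, hm0, dotProduct, mulVec]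
  rw [h0, ← Finset.add_sum_erase _ _ (Finset.mem_univ c)]
  have hc : ∑ j, A c j ^ m * β j
      = A c c ^ m * β c + ∑ j ∈ Finset.univ.erase c, A j c ^ m * β j := by
    rw [← Finset.add_sum_erase _ _ (Finset.mem_univ c)]
    refine congrArg _ (Finset.sum_congr rfl fun j _ => ?_)
    rw [hsym j c]
  rw [hc]
  have hrows : ∑ i ∈ Finset.univ.erase c, β i * ∑ j, A i j ^ m * β j
      = ∑ i ∈ Finset.univ.erase c, β i * (A i i ^ m * β i + A i c ^ m * β c) :=
    Finset.sum_congr rfl fun i hi => by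
      rw [rowSum A c hz β m hm (Finset.mem_erase.mp hi).1]
  rw [hrows, mul_add, Finset.mul_sum, add_assoc, ← Finset.sum_add_distrib]
  refine congrArg₂ _ (by ring) ?_
  exact Finset.sum_congr rfl fun i _ => by ring

private lemma keylem {n : ℕ} (A : Matrix (Fin n) (Fin n) ℝ) (c : Fin n)
    (hA : A.PosSemidef)
    (hz : ∀ i j, i ≠ j → i ≠ c → j ≠ c → A i j = 0)
    (β : Fin n → ℝ)
    (h1 : β ⬝ᵥ (hadPow A 1).mulVec β = 0)
    (h2 : β ⬝ᵥ (hadPow A 2).mulVec β = 0) :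
    ∀ m : ℕ, 1 ≤ m → β ⬝ᵥ (hadPow A m).mulVec β = 0 := by
  have hsym : ∀ i j, A j i = A i j := fun i j => by
    conv_rhs => rw [← hA.1]
    simp [conjTranspose_apply]
  have hdiag : ∀ i, 0 ≤ A i i := by
    intro i
    exact hA.diag_nonneg
  have hP1 : hadPow A 1 = A := by
    ext i j; simp [hadPow]
  have hker : A.mulVec β = 0 := by
    rw [← hA.dotProduct_mulVec_zero_iff β]
    show β ⬝ᵥ A *ᵥ β = 0
    rw [← hP1]; exact h1
  have hrow : ∀ i, i ≠ c → A i i * β i + A i c * β c = 0 := by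
    intro i hi
    have h := congrFun hker i
    have hmv : (A.mulVec β) i = ∑ j, A i j * β j := rfl
    have hrs := rowSum A c hz β 1 le_rfl hi
    simp only [pow_one] at hrs
    rw [hmv, hrs] at h
    simpa using h
  intro m hm
  rw [hadPow_form A c hsym hz β m hm]
  by_cases hβc : β c = 0
  · rw [hβc]
    have hall : ∀ i ∈ Finset.univ.erase c,
        A i i ^ m * β i ^ 2 + 2 * A i c ^ m * β i * 0 = 0 := by
      intro i hi
      have hic := (Finset.mem_erase.mp hi).1
      have h0 : A i i * β i = 0 := by have := hrow i hic; rw [hβc] at this; linarith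
      obtain ⟨m', rfl⟩ : ∃ m', m = m' + 1 := ⟨m - 1, by omega⟩
      calc A i i ^ (m' + 1) * β i ^ 2 + 2 * A i c ^ (m' + 1) * β i * 0
          = A i i ^ m' * (A i i * β i) * β i := by ring
        _ = 0 := by rw [h0]; ring
    rw [Finset.sum_eq_zero hall]
    ring
  · refine core (Finset.univ.erase c) (fun i => A i i) (fun i => A i c) β (A c c) (β c)
      (fun i _ => hdiag i) hβc
      (fun i hi => hrow i (Finset.mem_erase.mp hi).1)
      ?_ ?_ m hm
    · rw [← hadPow_form A c hsym hz β 1 le_rfl]; exact h1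
    · rw [← hadPow_form A c hsym hz β 2 one_le_two]; exact h2

theorem stmt18 (n : ℕ) (hn : 2 ≤ n) (G : SimpleGraph (Fin n)) (c : Fin n)
    (hstar : ∀ i j : Fin n, G.Adj i j ↔ (i = c ∧ j ≠ c) ∨ (j = c ∧ i ≠ c))
    (A : Matrix (Fin n) (Fin n) ℝ) (hA : A.PosSemidef)
    (hsparse : ∀ i j : Fin n, i ≠ j → ¬ G.Adj i j → A i j = 0) :
    (∀ k : ℕ, 2 < k → Nset A k = ∅) ∧
    ({β : Fin n → ℝ | β ⬝ᵥ (hadPow A 1).mulVec β = 0} ∩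
        {β : Fin n → ℝ | β ⬝ᵥ (hadPow A 2).mulVec β = 0} =
      ⋂ (m : ℕ) (_ : 1 ≤ m), {β : Fin n → ℝ | β ⬝ᵥ (hadPow A m).mulVec β = 0}) := by
  have hz : ∀ i j : Fin n, i ≠ j → i ≠ c → j ≠ c → A i j = 0 := by
    intro i j hij hic hjc
    refine hsparse i j hij ?_
    rw [hstar]
    rintro (⟨h, -⟩ | ⟨h, -⟩)
    · exact hic h
    · exact hjc h
  constructor
  · intro k hk
    rw [Set.eq_empty_iff_forall_notMem]
    rintro β ⟨hall, hpos⟩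
    have h1 := hall 1 (by omega)
    have h2 := hall 2 (by omega)
    have := keylem A c hA hz β h1 h2 k (by omega)
    linarith
  · ext β
    simp only [Set.mem_inter_iff, Set.mem_setOf_eq, Set.mem_iInter]
    constructor
    · rintro ⟨h1, h2⟩ m hm
      exact keylem A c hA hz β h1 h2 m hm
    · intro h
      exact ⟨h 1 le_rfl, h 2 one_le_two⟩
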